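/- arXiv:2006.08871 — 3 statements merged into one kernel-verified Lean document; each statement's English description precedes it below -/
import Mathlib

section
/- For any type S, every element w of the commutator subgroup of the free group F(S) on S can be written as a finite product w = (of a₁, of b₁)^{u₁} · ⋯ · (of a_k, of b_k)^{u_k} for some k ≥ 0, elements a₁, b₁, …, a_k, b_k of S, and elements u₁, …, u_k of F(S), where (x,y) = x⁻¹y⁻¹xy, x^u = u⁻¹xu, and 'of' denotes the canonical inclusion of generators into F(S). -/
section Aux

variable {S : Type*}

private def elemWord (a b : S) (u : FreeGroup S) : FreeGroup S :=
  u⁻¹ * ((FreeGroup.of a)⁻¹ * (FreeGroup.of b)⁻¹ * FreeGroup.of a * FreeGroup.of b) * u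

private def genComms (S : Type*) : Set (FreeGroup S) :=
  {x | ∃ a b : S, x = (FreeGroup.of a)⁻¹ * (FreeGroup.of b)⁻¹ * FreeGroup.of a * FreeGroup.of b}

private lemma list_form (l : List (FreeGroup S))
    (h : ∀ y ∈ l, ∃ a b u, y = elemWord a b u) :
    ∃ T : List (S × S × FreeGroup S), l = T.map (fun t => elemWord t.1 t.2.1 t.2.2) := by
  induction l with
  | nil => exact ⟨[], rfl⟩
  | cons y l ih =>
    obtain ⟨a, b, u, hy⟩ := h y (List.mem_cons_self)
    obtain ⟨T, hT⟩ := ih (fun z hz => h z (List.mem_cons_of_mem _ hz))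
    exact ⟨(a, b, u) :: T, by simp [hy, hT]⟩

end Aux

open scoped commutatorElement

/-- Every element of the commutator subgroup of a free group is a finite product of
conjugates of commutators of generators:
`w = (of a₁, of b₁)^{u₁} ⋯ (of a_k, of b_k)^{u_k}`, where `(x,y) = x⁻¹y⁻¹xy` and
`x^u = u⁻¹ x u`. -/
theorem mem_commutator_freeGroup_eq_elementary_word (S : Type*) (w : FreeGroup S)
    (hw : w ∈ commutator (FreeGroup S)) :
    ∃ (k : ℕ) (a b : Fin k → S) (u : Fin k → FreeGroup S),
      w = (List.ofFn (fun i =>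
        (u i)⁻¹ * ((FreeGroup.of (a i))⁻¹ * (FreeGroup.of (b i))⁻¹ *
          FreeGroup.of (a i) * FreeGroup.of (b i)) * u i)).prod := by
  set N : Subgroup (FreeGroup S) := Subgroup.normalClosure (genComms S) with hN
  haveI : N.Normal := Subgroup.normalClosure_normal
  -- step 1 : commutator ≤ N
  have comm_of_mem : ∀ x y : FreeGroup S, ⁅x, y⁆ ∈ N →
      Commute (QuotientGroup.mk' N x) (QuotientGroup.mk' N y) := by
    intro x y hxy
    rw [← QuotientGroup.ker_mk' N, MonoidHom.mem_ker, map_commutatorElement] at hxy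
    exact commutatorElement_eq_one_iff_commute.mp hxy
  have hbase : ∀ a b : S, ⁅FreeGroup.of a, FreeGroup.of b⁆ ∈ N := by
    intro a b
    have hx : ((FreeGroup.of a)⁻¹ * (FreeGroup.of b)⁻¹ * FreeGroup.of a * FreeGroup.of b) ∈ N :=
      Subgroup.subset_normalClosure ⟨a, b, rfl⟩
    have h2 := (Subgroup.normalClosure_normal (s := genComms S)).conj_mem _ hx
      (FreeGroup.of a * FreeGroup.of b)
    have heq : ⁅FreeGroup.of a, FreeGroup.of b⁆ =
        (FreeGroup.of a * FreeGroup.of b) *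
          ((FreeGroup.of a)⁻¹ * (FreeGroup.of b)⁻¹ * FreeGroup.of a * FreeGroup.of b) *
          (FreeGroup.of a * FreeGroup.of b)⁻¹ := by
      rw [commutatorElement_def]; group
    rw [heq]
    exact h2
  have hle : commutator (FreeGroup S) ≤ N := by
    rw [commutator_def, Subgroup.commutator_le]
    intro g hg h hh
    clear hg hh
    have hgen : ∀ (a : S) (y : FreeGroup S),
        Commute (QuotientGroup.mk' N (FreeGroup.of a)) (QuotientGroup.mk' N y) := by
      intro a y
      induction y using FreeGroup.induction_on with
      | C1 => rw [map_one]; exact Commute.one_right _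
      | of b => exact comm_of_mem _ _ (hbase a b)
      | inv_of b hb => rw [map_inv]; exact hb.inv_right
      | mul x y hx hy => rw [map_mul]; exact hx.mul_right hy
    have key : Commute (QuotientGroup.mk' N g) (QuotientGroup.mk' N h) := by
      induction g using FreeGroup.induction_on with
      | C1 => rw [map_one]; exact Commute.one_left _
      | of a => exact hgen a h
      | inv_of a ha => rw [map_inv]; exact ha.inv_left
      | mul x y hx hy => rw [map_mul]; exact hx.mul_left hy
    have h1 : QuotientGroup.mk' N ⁅g, h⁆ = 1 := by
      rw [map_commutatorElement, key.commutator_eq]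
    rwa [← MonoidHom.mem_ker, QuotientGroup.ker_mk'] at h1
  have hwN : w ∈ N := hle hw
  -- step 2 : membership in normal closure gives a list of conjugates
  rw [hN, Subgroup.normalClosure] at hwN
  have hwM : w ∈ Submonoid.closure
      (Group.conjugatesOfSet (genComms S) ∪ (Group.conjugatesOfSet (genComms S))⁻¹) := by
    rw [← Subgroup.closure_toSubmonoid]
    exact hwN
  obtain ⟨l, hl, hprod⟩ := Submonoid.exists_list_of_mem_closure hwM
  have hform : ∀ y ∈ l, ∃ a b u, y = elemWord a b u := by
    intro y hy
    rcases hl y hy with h | h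
    · rcases Group.mem_conjugatesOfSet_iff.mp h with ⟨x, ⟨a, b, hx⟩, c, hc⟩
      set d : FreeGroup S := (c : FreeGroup S) with hd
      refine ⟨a, b, d⁻¹, ?_⟩
      have h1 : d * x = y * d := hc
      have h2 : y = d * x * d⁻¹ := by rw [h1]; group
      rw [h2, hx, elemWord]; group
    · rw [Set.mem_inv] at h
      rcases Group.mem_conjugatesOfSet_iff.mp h with ⟨x, ⟨a, b, hx⟩, c, hc⟩
      set d : FreeGroup S := (c : FreeGroup S) with hd
      refine ⟨b, a, d⁻¹, ?_⟩
      have h1 : d * x = y⁻¹ * d := hc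
      have h2 : y⁻¹ = d * x * d⁻¹ := by rw [h1]; group
      have h3 : y = d * x⁻¹ * d⁻¹ := by rw [← inv_inv y, h2]; group
      rw [h3, hx, elemWord]; group
  obtain ⟨T, hT⟩ := list_form l hform
  refine ⟨T.length, fun i => (T.get i).1, fun i => (T.get i).2.1, fun i => (T.get i).2.2, ?_⟩
  have hofn : (List.ofFn (fun i => elemWord (T.get i).1 (T.get i).2.1 (T.get i).2.2))
      = T.map (fun t => elemWord t.1 t.2.1 t.2.2) := by
    conv_rhs => rw [← List.ofFn_get T, List.map_ofFn]
    rfl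
  rw [← hprod, hT, ← hofn]
  rfl
end

section
/- Let S be a type and let L be a list of pairs in S × {±1} (signed letters), of length n. Suppose there exists a fixed-point-free involution f on the positions {0, …, n−1} of L such that (i) for every position i, the letter at position f(i) has the same element of S as the letter at position i but the opposite sign, and (ii) the matching is noncrossing: there are no positions i < k < j < l with f(i) = j and f(k) = l. Then the element of the free group F(S) represented by L (the product over the list of of(s)^ε for each letter (s, ε)) equals the identity. -/
private lemma get_idx_congr {α : Type*} (L : List α) {i j : ℕ} (hi : i < L.length)
    (hij : i = j) (hj : j < L.length) : L.get ⟨i, hi⟩ = L.get ⟨j, hj⟩ := by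
  subst hij; rfl

lemma nc_aux (S : Type*) : ∀ n : ℕ, ∀ L : List (S × ℤ), L.length ≤ n →
    ∀ f : ℕ → ℕ,
    (∀ i, i < L.length → f i < L.length) →
    (∀ i, i < L.length → f (f i) = i) →
    (∀ i, i < L.length → f i ≠ i) →
    (∀ i, (h : i < L.length) → (hf : f i < L.length) →
      L.get ⟨f i, hf⟩ = ((L.get ⟨i, h⟩).1, -(L.get ⟨i, h⟩).2)) →
    (∀ i k j l : ℕ, i < k → k < j → j < l → l < L.length → f i = j → f k = l → False) →
    (L.map fun p => FreeGroup.of p.1 ^ p.2).prod = 1 := by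
  intro n
  induction n with
  | zero =>
    intro L hL f _ _ _ _ _
    have : L = [] := List.length_eq_zero_iff.mp (Nat.le_zero.mp hL)
    simp [this]
  | succ n IH =>
    intro L hL f hbd hinv hfree hlet hnc
    match L with
    | [] => simp
    | a :: T =>
      set L := a :: T with hLdef
      have h0 : 0 < L.length := by simp [hLdef]
      have hj : f 0 < L.length := hbd 0 h0
      have hjne : f 0 ≠ 0 := hfree 0 h0
      have hfj : f (f 0) = 0 := hinv 0 h0
      obtain ⟨j', hj'⟩ : ∃ j', f 0 = j' + 1 := ⟨f 0 - 1, by omega⟩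
      -- basic injectivity-style facts
      have hlenL : L.length = T.length + 1 := by simp [hLdef]
      have hne0 : ∀ k, 0 < k → k < L.length → k ≠ j' + 1 → f k ≠ 0 := by
        intro k hk hkL hkj hc
        have := hinv k hkL
        rw [hc] at this
        omega
      have hnej : ∀ k, 0 < k → k < L.length → k ≠ j' + 1 → f k ≠ j' + 1 := by
        intro k hk hkL hkj hc
        have := hinv k hkL
        rw [hc, ← hj', hfj] at this
        omega
      have hMin : ∀ k, 0 < k → k < j' + 1 → 0 < f k ∧ f k < j' + 1 := by
        intro k hk hkj
        have hkL : k < L.length := by omega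
        have h1 : f k ≠ 0 := hne0 k hk hkL (by omega)
        have h2 : f k ≠ j' + 1 := hnej k hk hkL (by omega)
        have h3 : ¬ (j' + 1 < f k) := by
          intro hc
          exact hnc 0 k (j' + 1) (f k) hk hkj hc (hbd k hkL) hj' rfl
        omega
      have hHigh : ∀ k, j' + 1 < k → k < L.length → j' + 1 < f k := by
        intro k hk hkL
        have h1 : f k ≠ 0 := hne0 k (by omega) hkL (by omega)
        have h2 : f k ≠ j' + 1 := hnej k (by omega) hkL (by omega)
        have h3 : ¬ (0 < f k ∧ f k < j' + 1) := by
          rintro ⟨ha, hb⟩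
          have hffk : f (f k) = k := hinv k hkL
          exact hnc 0 (f k) (j' + 1) k ha hb hk hkL hj' hffk
        omega
      have hj'T : j' < T.length := by omega
      set M := T.take j' with hMdef
      set b := T.get ⟨j', hj'T⟩ with hbdef
      set N := T.drop (j' + 1) with hNdef
      have hT : T = M ++ b :: N := by
        rw [hMdef, hbdef, hNdef]
        conv_lhs => rw [← List.take_append_drop j' T]
        congr 1
        rw [List.drop_eq_getElem_cons hj'T]
        rfl
      have hMlen : M.length = j' := by
        simp [hMdef, Nat.min_eq_left (le_of_lt hj'T)]
      have hNlen : N.length + (j' + 2) = L.length := by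
        simp [hNdef, hLdef]
        omega
      have hMget : ∀ k (h : k < M.length),
          M.get ⟨k, h⟩ = L.get ⟨k + 1, by omega⟩ := by
        intro k h
        simp only [hMdef, List.get_eq_getElem, List.getElem_take, hLdef,
          List.getElem_cons_succ]
      have hNget : ∀ k (h : k < N.length),
          N.get ⟨k, h⟩ = L.get ⟨j' + 2 + k, by omega⟩ := by
        intro k h
        rw [get_idx_congr L (by omega) (show j' + 2 + k = (j' + 1 + k) + 1 by omega) (by omega)]
        simp only [hNdef, hLdef, List.get_eq_getElem, List.getElem_cons_succ,
          List.getElem_drop]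
      have prodM : (M.map fun p => FreeGroup.of p.1 ^ p.2).prod = 1 := by
        apply IH M (by omega) (fun k => f (k + 1) - 1)
        · intro k hk
          have h1 := hMin (k + 1) (by omega) (by omega)
          omega
        · intro k hk
          have h1 := hMin (k + 1) (by omega) (by omega)
          have h2 : f (k + 1) - 1 + 1 = f (k + 1) := by omega
          simp only [h2]
          rw [hinv (k + 1) (by omega)]
          omega
        · intro k hk hc
          have h1 := hMin (k + 1) (by omega) (by omega)
          have h2 := hfree (k + 1) (by omega)
          omega
        · intro k hk hfk
          have h1 := hMin (k + 1) (by omega) (by omega)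
          rw [hMget _ hfk, hMget _ hk,
            get_idx_congr L (by omega) (show f (k + 1) - 1 + 1 = f (k + 1) by omega) (by omega)]
          exact hlet (k + 1) (by omega) (by omega)
        · intro i k2 j2 l hik hkj2 hjl hl hfi hfk
          have hi1 := hMin (i + 1) (by omega) (by omega)
          have hk1 := hMin (k2 + 1) (by omega) (by omega)
          exact hnc (i + 1) (k2 + 1) (j2 + 1) (l + 1) (by omega) (by omega) (by omega)
            (by omega) (by omega) (by omega)
      have prodN : (N.map fun p => FreeGroup.of p.1 ^ p.2).prod = 1 := by
        apply IH N (by omega) (fun k => f (j' + 2 + k) - (j' + 2))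
        · intro k hk
          have h1 := hHigh (j' + 2 + k) (by omega) (by omega)
          have h2 := hbd (j' + 2 + k) (by omega)
          omega
        · intro k hk
          have h1 := hHigh (j' + 2 + k) (by omega) (by omega)
          have h2 : j' + 2 + (f (j' + 2 + k) - (j' + 2)) = f (j' + 2 + k) := by omega
          simp only [h2]
          rw [hinv (j' + 2 + k) (by omega)]
          omega
        · intro k hk hc
          have h1 := hHigh (j' + 2 + k) (by omega) (by omega)
          have h2 := hfree (j' + 2 + k) (by omega)
          omega
        · intro k hk hfk
          have h1 := hHigh (j' + 2 + k) (by omega) (by omega)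
          rw [hNget _ hfk, hNget _ hk,
            get_idx_congr L (by omega)
              (show j' + 2 + (f (j' + 2 + k) - (j' + 2)) = f (j' + 2 + k) by omega) (by omega)]
          exact hlet (j' + 2 + k) (by omega) (by omega)
        · intro i k2 j2 l hik hkj2 hjl hl hfi hfk
          have hi1 := hHigh (j' + 2 + i) (by omega) (by omega)
          have hk1 := hHigh (j' + 2 + k2) (by omega) (by omega)
          exact hnc (j' + 2 + i) (j' + 2 + k2) (j' + 2 + j2) (j' + 2 + l) (by omega) (by omega)
            (by omega) (by omega) (by omega) (by omega)
      have hb : b = (a.1, -a.2) := by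
        have h1 := hlet 0 h0 hj
        rw [get_idx_congr L hj hj' (by omega)] at h1
        simp only [hLdef, List.get_eq_getElem, List.getElem_cons_succ,
          List.getElem_cons_zero] at h1
        rw [hbdef]
        simpa using h1
      conv_lhs => rw [hLdef, hT]
      simp only [List.map_cons, List.map_append, List.prod_cons, List.prod_append,
        prodM, prodN, one_mul, mul_one]
      rw [hb]
      simp [← zpow_add]

/-- If a list of signed letters admits a fixed-point-free, sign-reversing,
letter-preserving, noncrossing matching of its positions, then the word it
represents in the free group is the identity. -/
theorem noncrossing_matching_word_eq_one (S : Type*) (L : List (S × ℤ))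
    (hsign : ∀ p ∈ L, p.2 = 1 ∨ p.2 = -1)
    (f : Fin L.length → Fin L.length)
    (hinvol : ∀ i, f (f i) = i)
    (hfree : ∀ i, f i ≠ i)
    (hletter : ∀ i, (L.get (f i)).1 = (L.get i).1)
    (hopp : ∀ i, (L.get (f i)).2 = -(L.get i).2)
    (hnc : ¬ ∃ i k j l : Fin L.length, i < k ∧ k < j ∧ j < l ∧ f i = j ∧ f k = l) :
    (L.map fun p => FreeGroup.of p.1 ^ p.2).prod = 1 := by
  apply nc_aux S L.length L le_rfl
    (fun i => if h : i < L.length then (f ⟨i, h⟩ : ℕ) else i)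
  · intro i hi
    simp only [hi, dif_pos]
    exact (f ⟨i, hi⟩).isLt
  · intro i hi
    simp only [hi, dif_pos, (f ⟨i, hi⟩).isLt, Fin.eta]
    rw [hinvol ⟨i, hi⟩]
  · intro i hi hc
    simp only [hi, dif_pos] at hc
    exact hfree ⟨i, hi⟩ (Fin.ext hc)
  · intro i hi hfi
    simp only [hi, dif_pos] at hfi ⊢
    have h1 : (⟨(f ⟨i, hi⟩ : ℕ), hfi⟩ : Fin L.length) = f ⟨i, hi⟩ := Fin.eta _ _
    rw [h1]
    exact Prod.ext (hletter ⟨i, hi⟩) (hopp ⟨i, hi⟩)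
  · intro i k j l hik hkj hjl hl hfi hfk
    have hi : i < L.length := by omega
    have hk : k < L.length := by omega
    have hj : j < L.length := by omega
    simp only [hi, dif_pos] at hfi
    simp only [hk, dif_pos] at hfk
    exact hnc ⟨⟨i, hi⟩, ⟨k, hk⟩, ⟨j, hj⟩, ⟨l, hl⟩, hik, hkj, hjl, Fin.ext hfi, Fin.ext hfk⟩
end

section
/- Let S be a type and let L be a list of pairs in S × {±1} (signed letters), of length n. If the element of the free group F(S) represented by L (the product over the list of of(s)^ε for each letter (s, ε)) equals the identity, then there exists a fixed-point-free involution f on the positions {0, …, n−1} of L such that (i) for every position i, the letter at position f(i) has the same element of S as the letter at position i but the opposite sign, and (ii) the matching is noncrossing: there are no positions i < k < j < l with f(i) = j and f(k) = l. -/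
lemma wm_of_eq (S : Type*) (x : S) : FreeGroup.of x = FreeGroup.mk [(x, true)] := rfl

lemma wm_of_inv_eq (S : Type*) (x : S) : (FreeGroup.of x)⁻¹ = FreeGroup.mk [(x, false)] := by
  rw [wm_of_eq, FreeGroup.inv_mk]; simp [FreeGroup.invRev]

lemma wm_prod_eq_mk {S : Type*} (L : List (S × ℤ)) (hsign : ∀ p ∈ L, p.2 = 1 ∨ p.2 = -1) :
    (L.map fun p => FreeGroup.of p.1 ^ p.2).prod
      = FreeGroup.mk (L.map fun p => (p.1, (p.2 = 1 : Bool))) := by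
  induction L with
  | nil => simp [FreeGroup.one_eq_mk]
  | cons a L ih =>
    simp only [List.map_cons, List.prod_cons]
    rw [ih (fun p hp => hsign p (List.mem_cons_of_mem _ hp))]
    have hcons : ∀ b : Bool, FreeGroup.mk ((a.1, b) :: L.map fun p => (p.1, (p.2 = 1 : Bool)))
        = FreeGroup.mk [(a.1, b)] * FreeGroup.mk (L.map fun p => (p.1, (p.2 = 1 : Bool))) := by
      intro b; rw [FreeGroup.mul_mk]; rfl
    rcases hsign a List.mem_cons_self with h | h <;> rw [h]
    · rw [zpow_one, hcons]
      norm_num [wm_of_eq]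
    · rw [zpow_neg, zpow_one, hcons]
      norm_num [wm_of_inv_eq]

lemma wm_exists_cancel {S : Type*} (L : List (S × ℤ)) (hsign : ∀ p ∈ L, p.2 = 1 ∨ p.2 = -1)
    (hone : (L.map fun p => FreeGroup.of p.1 ^ p.2).prod = 1) (hne : L ≠ []) :
    ∃ (A : List (S × ℤ)) (x : S) (ε : ℤ) (B : List (S × ℤ)),
      L = A ++ (x, ε) :: (x, -ε) :: B := by
  rw [wm_prod_eq_mk L hsign] at hone
  set g : S × ℤ → S × Bool := fun p => (p.1, (p.2 = 1 : Bool)) with hg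
  have hred : FreeGroup.Red (L.map g) [] := by
    rw [FreeGroup.one_eq_mk, FreeGroup.Red.exact] at hone
    obtain ⟨m, h1, h2⟩ := hone
    rw [FreeGroup.Red.nil_iff] at h2
    subst h2; exact h1
  obtain ⟨A', x, b, B', hl⟩ : ∃ A x b B, L.map g = A ++ (x, b) :: (x, !b) :: B := by
    obtain ⟨l, hl0⟩ : ∃ l, L.map g = l := ⟨_, rfl⟩
    rw [hl0] at hred
    rcases Relation.ReflTransGen.cases_head hred with h0 | ⟨m, hs, _⟩
    · rw [← hl0] at h0; exact absurd (List.map_eq_nil_iff.mp h0) hne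
    · cases hs with
      | @not A B x b => exact ⟨A, x, b, B, hl0⟩
  have hlen : L.length = A'.length + 2 + B'.length := by
    have := congrArg List.length hl
    simp at this
    omega
  set i := A'.length with hi
  have hi1 : i + 1 < L.length := by omega
  have hi0 : i < L.length := by omega
  have h1 : (L.map g)[i]'(by simpa using hi0) = (x, b) := by
    rw [List.getElem_of_eq hl, List.getElem_append_right (Nat.le_refl _)]
    simp
  have h2 : (L.map g)[i+1]'(by simpa using hi1) = (x, !b) := by
    rw [List.getElem_of_eq hl, List.getElem_append_right (by omega : A'.length ≤ i + 1)]
    simp [hi]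
  rw [List.getElem_map] at h1 h2
  have hx1 : (L[i]'hi0).1 = x := congrArg Prod.fst h1
  have hx2 : (L[i+1]'hi1).1 = x := congrArg Prod.fst h2
  have hb1 : ((L[i]'hi0).2 = 1 : Bool) = b := congrArg Prod.snd h1
  have hb2 : ((L[i+1]'hi1).2 = 1 : Bool) = !b := congrArg Prod.snd h2
  have hs1 := hsign (L[i]'hi0) (List.getElem_mem _)
  have hs2 := hsign (L[i+1]'hi1) (List.getElem_mem _)
  have hneg : (L[i+1]'hi1).2 = -(L[i]'hi0).2 := by
    rcases hs1 with e1 | e1 <;> rcases hs2 with e2 | e2 <;> rw [e1] at hb1 <;>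
      rw [e2] at hb2 <;> cases b <;> simp at hb1 hb2 <;> omega
  refine ⟨L.take i, x, (L[i]'hi0).2, L.drop (i + 2), ?_⟩
  have hd1 : L.drop i = (L[i]'hi0) :: L.drop (i + 1) := List.drop_eq_getElem_cons hi0
  have hd2 : L.drop (i+1) = (L[i+1]'hi1) :: L.drop (i + 2) := List.drop_eq_getElem_cons hi1
  conv_lhs => rw [← List.take_append_drop i L, hd1, hd2]
  have e1 : (L[i]'hi0) = (x, (L[i]'hi0).2) := Prod.ext_iff.mpr ⟨hx1, rfl⟩
  have e2 : (L[i+1]'hi1) = (x, -(L[i]'hi0).2) := Prod.ext_iff.mpr ⟨hx2, hneg⟩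
  rw [← e2, ← e1]


lemma wm_getElem_congr {α : Type*} (l : List α) {i j : ℕ} (h : i = j) {hi : i < l.length} :
    l[i]'hi = l[j]'(h ▸ hi) := by subst h; rfl

lemma wm_glue {S : Type*} (A B : List (S × ℤ)) (x : S) (ε : ℤ)
    (f' : Fin (A ++ B).length → Fin (A ++ B).length)
    (h1' : ∀ i, f' (f' i) = i) (h2' : ∀ i, f' i ≠ i)
    (h3' : ∀ i, ((A ++ B).get (f' i)).1 = ((A ++ B).get i).1)
    (h4' : ∀ i, ((A ++ B).get (f' i)).2 = -((A ++ B).get i).2)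
    (h5' : ¬ ∃ i k j l : Fin (A ++ B).length, i < k ∧ k < j ∧ j < l ∧ f' i = j ∧ f' k = l) :
    ∃ f : Fin (A ++ (x, ε) :: (x, -ε) :: B).length → Fin (A ++ (x, ε) :: (x, -ε) :: B).length,
      (∀ i, f (f i) = i) ∧
      (∀ i, f i ≠ i) ∧
      (∀ i, ((A ++ (x, ε) :: (x, -ε) :: B).get (f i)).1 = ((A ++ (x, ε) :: (x, -ε) :: B).get i).1) ∧
      (∀ i, ((A ++ (x, ε) :: (x, -ε) :: B).get (f i)).2 = -((A ++ (x, ε) :: (x, -ε) :: B).get i).2) ∧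
      ¬ ∃ i k j l : Fin (A ++ (x, ε) :: (x, -ε) :: B).length,
          i < k ∧ k < j ∧ j < l ∧ f i = j ∧ f k = l := by
  have hlen1 : (A ++ (x, ε) :: (x, -ε) :: B).length = A.length + 2 + B.length := by
    simp; omega
  have hlen2 : (A ++ B).length = A.length + B.length := by simp
  -- the embedding of old positions into new positions
  obtain ⟨e, he⟩ : ∃ e : Fin (A ++ B).length → Fin (A ++ (x, ε) :: (x, -ε) :: B).length,
      ∀ j, (e j).val = if j.val < A.length then j.val else j.val + 2 :=
    ⟨fun j => if h : j.val < A.length then ⟨j.val, by omega⟩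
      else ⟨j.val + 2, by have := j.2; omega⟩,
     fun j => by dsimp only; split <;> simp_all⟩
  have himg : ∀ j, (e j).val ≠ A.length ∧ (e j).val ≠ A.length + 1 := by
    intro j; rw [he]; split <;> omega
  have hmono : ∀ j k : Fin (A ++ B).length, j < k → e j < e k := by
    intro j k h
    have hj := he j; have hk := he k
    rw [Fin.lt_def] at h ⊢
    rw [hj, hk]; split <;> split <;> omega
  have hmono' : ∀ j k : Fin (A ++ B).length, e j < e k → j < k := by
    intro j k h
    rcases lt_trichotomy j k with h' | h' | h'
    · exact h'
    · subst h'; exact absurd h (lt_irrefl _)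
    · exact absurd (hmono _ _ h') (not_lt.mpr (le_of_lt h))
  have hinj : Function.Injective e := by
    intro j k h
    rcases lt_trichotomy j k with h' | h' | h'
    · exact absurd (hmono _ _ h') (by rw [h]; exact lt_irrefl _)
    · exact h'
    · exact absurd (hmono _ _ h') (by rw [h]; exact lt_irrefl _)
  have hsurj : ∀ i : Fin (A ++ (x, ε) :: (x, -ε) :: B).length, i.val ≠ A.length → i.val ≠ A.length + 1 → ∃ j, e j = i := by
    intro i hp hp1
    by_cases h : i.val < A.length
    · refine ⟨⟨i.val, by omega⟩, Fin.ext ?_⟩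
      rw [he]; simp only [Fin.val_mk]; simp [h]
    · refine ⟨⟨i.val - 2, by have := i.2; omega⟩, Fin.ext ?_⟩
      have := i.2
      rw [he]; simp only [Fin.val_mk]
      split <;> omega
  -- get lemmas
  have hpl : A.length < (A ++ (x, ε) :: (x, -ε) :: B).length := by omega
  have hp1l : A.length + 1 < (A ++ (x, ε) :: (x, -ε) :: B).length := by omega
  have hgetp : (A ++ (x, ε) :: (x, -ε) :: B).get ⟨A.length, hpl⟩ = (x, ε) := by
    show (A ++ (x, ε) :: (x, -ε) :: B)[A.length]'hpl = _
    calc (A ++ (x, ε) :: (x, -ε) :: B)[A.length]'hpl = ((x, ε) :: (x, -ε) :: B)[A.length - A.length]'(by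
            simp only [List.length_cons]; omega) := List.getElem_append_right (Nat.le_refl _)
      _ = ((x, ε) :: (x, -ε) :: B)[0]'(by simp) := wm_getElem_congr _ (by omega)
      _ = (x, ε) := rfl
  have hgetp1 : (A ++ (x, ε) :: (x, -ε) :: B).get ⟨A.length + 1, hp1l⟩ = (x, -ε) := by
    show (A ++ (x, ε) :: (x, -ε) :: B)[A.length+1]'hp1l = _
    calc (A ++ (x, ε) :: (x, -ε) :: B)[A.length+1]'hp1l = ((x, ε) :: (x, -ε) :: B)[A.length + 1 - A.length]'(by
            simp only [List.length_cons]; omega) := List.getElem_append_right (by omega)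
      _ = ((x, ε) :: (x, -ε) :: B)[1]'(by simp) := wm_getElem_congr _ (by omega)
      _ = (x, -ε) := rfl
  have hgete : ∀ j, (A ++ (x, ε) :: (x, -ε) :: B).get (e j) = (A ++ B).get j := by
    intro j
    have hj2 := j.2
    simp only [List.get_eq_getElem]
    by_cases h : j.val < A.length
    · have hev : (e j).val = j.val := by rw [he]; simp [h]
      calc (A ++ (x, ε) :: (x, -ε) :: B)[(e j).val]'(e j).2 = (A ++ (x, ε) :: (x, -ε) :: B)[j.val]'(by omega) := wm_getElem_congr _ hev
        _ = A[j.val]'(by omega) := List.getElem_append_left (by omega)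
        _ = (A ++ B)[j.val]'hj2 := (List.getElem_append_left (by omega)).symm
    · have hev : (e j).val = j.val + 2 := by rw [he]; simp [h]
      calc (A ++ (x, ε) :: (x, -ε) :: B)[(e j).val]'(e j).2 = (A ++ (x, ε) :: (x, -ε) :: B)[j.val + 2]'(by omega) := wm_getElem_congr _ hev
        _ = ((x, ε) :: (x, -ε) :: B)[j.val + 2 - A.length]'(by
              simp only [List.length_cons]; omega) := List.getElem_append_right (by omega)
        _ = ((x, ε) :: (x, -ε) :: B)[(j.val - A.length) + 2]'(by
              simp only [List.length_cons]; omega) := wm_getElem_congr _ (by omega)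
        _ = B[j.val - A.length]'(by omega) := by simp only [List.getElem_cons_succ]
        _ = (A ++ B)[j.val]'hj2 := (List.getElem_append_right (by omega)).symm
  -- the new matching
  obtain ⟨f, hfchar⟩ :
      ∃ f : Fin (A ++ (x, ε) :: (x, -ε) :: B).length → Fin (A ++ (x, ε) :: (x, -ε) :: B).length,
        ∀ i : Fin (A ++ (x, ε) :: (x, -ε) :: B).length,
          (i.val = A.length → (f i).val = A.length + 1) ∧
          (i.val = A.length + 1 → (f i).val = A.length) ∧
          (∀ j, i = e j → f i = e (f' j)) := by
    refine ⟨fun i =>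
      if h1 : i.val = A.length then ⟨A.length + 1, hp1l⟩
      else if h2 : i.val = A.length + 1 then ⟨A.length, hpl⟩
      else if h3 : i.val < A.length then e (f' ⟨i.val, by omega⟩)
      else e (f' ⟨i.val - 2, by have := i.2; omega⟩), ?_⟩
    intro i
    refine ⟨?_, ?_, ?_⟩
    · intro h; dsimp only; rw [dif_pos h]
    · intro h; dsimp only; rw [dif_neg (by omega), dif_pos h]
    · intro j hij
      have hiv : i.val = (e j).val := congrArg Fin.val hij
      rw [he] at hiv
      have hj2 := j.2
      dsimp only
      by_cases hc : j.val < A.length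
      · have hiv' : i.val = j.val := by simpa [hc] using hiv
        rw [dif_neg (by omega), dif_neg (by omega), dif_pos (by omega)]
        have : (⟨i.val, by omega⟩ : Fin (A ++ B).length) = j := Fin.ext (by simpa using hiv')
        rw [this]
      · have hiv' : i.val = j.val + 2 := by simpa [hc] using hiv
        rw [dif_neg (by omega), dif_neg (by omega), dif_neg (by omega)]
        have : (⟨i.val - 2, by have := i.2; omega⟩ : Fin (A ++ B).length) = j :=
          Fin.ext (by simp; omega)
        rw [this]
  have hfp : ∀ i : Fin (A ++ (x, ε) :: (x, -ε) :: B).length, i.val = A.length → (f i).val = A.length + 1 := fun i h => (hfchar i).1 h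
  have hfp1 : ∀ i : Fin (A ++ (x, ε) :: (x, -ε) :: B).length, i.val = A.length + 1 → (f i).val = A.length := fun i h => (hfchar i).2.1 h
  have hfe : ∀ j, f (e j) = e (f' j) := fun j => (hfchar (e j)).2.2 j rfl
  refine ⟨f, ?_, ?_, ?_, ?_, ?_⟩
  · -- involution
    intro i
    by_cases c1 : i.val = A.length
    · exact Fin.ext (by rw [hfp1 _ (hfp i c1), c1])
    by_cases c2 : i.val = A.length + 1
    · exact Fin.ext (by rw [hfp _ (hfp1 i c2), c2])
    obtain ⟨j, hj⟩ := hsurj i c1 c2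
    rw [← hj, hfe, hfe, h1']
  · -- fixed point free
    intro i
    by_cases c1 : i.val = A.length
    · intro heq
      have := congrArg Fin.val heq
      rw [hfp i c1, c1] at this
      omega
    by_cases c2 : i.val = A.length + 1
    · intro heq
      have := congrArg Fin.val heq
      rw [hfp1 i c2, c2] at this
      omega
    obtain ⟨j, hj⟩ := hsurj i c1 c2
    rw [← hj, hfe]
    intro heq
    exact h2' j (hinj heq)
  · -- letters
    intro i
    by_cases c1 : i.val = A.length
    · have e1 : i = ⟨A.length, hpl⟩ := Fin.ext c1
      have e2 : f i = ⟨A.length + 1, hp1l⟩ := Fin.ext (hfp i c1)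
      rw [e2, e1, hgetp, hgetp1]
    by_cases c2 : i.val = A.length + 1
    · have e1 : i = ⟨A.length + 1, hp1l⟩ := Fin.ext c2
      have e2 : f i = ⟨A.length, hpl⟩ := Fin.ext (hfp1 i c2)
      rw [e2, e1, hgetp, hgetp1]
    obtain ⟨j, hj⟩ := hsurj i c1 c2
    rw [← hj, hfe, hgete, hgete, h3']
  · -- signs
    intro i
    by_cases c1 : i.val = A.length
    · have e1 : i = ⟨A.length, hpl⟩ := Fin.ext c1
      have e2 : f i = ⟨A.length + 1, hp1l⟩ := Fin.ext (hfp i c1)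
      rw [e2, e1, hgetp, hgetp1]
    by_cases c2 : i.val = A.length + 1
    · have e1 : i = ⟨A.length + 1, hp1l⟩ := Fin.ext c2
      have e2 : f i = ⟨A.length, hpl⟩ := Fin.ext (hfp1 i c2)
      rw [e2, e1, hgetp, hgetp1]
      simp
    obtain ⟨j, hj⟩ := hsurj i c1 c2
    rw [← hj, hfe, hgete, hgete, h4']
  · -- noncrossing
    rintro ⟨i, k, j, l, hik, hkj, hjl, hfi, hfk⟩
    rw [Fin.lt_def] at hik hkj hjl
    have hji : j.val = (f i).val := by rw [hfi]
    have hlk : l.val = (f k).val := by rw [hfk]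
    have ci1 : i.val ≠ A.length := by
      intro h; rw [hfp i h] at hji; omega
    have ci2 : i.val ≠ A.length + 1 := by
      intro h; rw [hfp1 i h] at hji; omega
    have ck1 : k.val ≠ A.length := by
      intro h; rw [hfp k h] at hlk; omega
    have ck2 : k.val ≠ A.length + 1 := by
      intro h; rw [hfp1 k h] at hlk; omega
    obtain ⟨a, ha⟩ := hsurj i ci1 ci2
    obtain ⟨b, hb⟩ := hsurj k ck1 ck2
    have hja : j = e (f' a) := by rw [← hfi, ← ha, hfe]
    have hlb : l = e (f' b) := by rw [← hfk, ← hb, hfe]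
    refine h5' ⟨a, b, f' a, f' b, ?_, ?_, ?_, rfl, rfl⟩
    · exact hmono' _ _ (by rw [ha, hb]; exact Fin.lt_def.mpr hik)
    · exact hmono' _ _ (by rw [hb, ← hja]; exact Fin.lt_def.mpr hkj)
    · exact hmono' _ _ (by rw [← hja, ← hlb]; exact Fin.lt_def.mpr hjl)

/-- If a list of signed letters represents the identity of the free group, then it
admits a fixed-point-free, sign-reversing, letter-preserving, noncrossing matching
of its positions. -/
theorem word_eq_one_exists_noncrossing_matching (S : Type*) (L : List (S × ℤ))
    (hsign : ∀ p ∈ L, p.2 = 1 ∨ p.2 = -1)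
    (hone : (L.map fun p => FreeGroup.of p.1 ^ p.2).prod = 1) :
    ∃ f : Fin L.length → Fin L.length,
      (∀ i, f (f i) = i) ∧
      (∀ i, f i ≠ i) ∧
      (∀ i, (L.get (f i)).1 = (L.get i).1) ∧
      (∀ i, (L.get (f i)).2 = -(L.get i).2) ∧
      ¬ ∃ i k j l : Fin L.length, i < k ∧ k < j ∧ j < l ∧ f i = j ∧ f k = l := by
  suffices h : ∀ (n : ℕ) (L : List (S × ℤ)), L.length ≤ n →
      (∀ p ∈ L, p.2 = 1 ∨ p.2 = -1) →
      (L.map fun p => FreeGroup.of p.1 ^ p.2).prod = 1 →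
      ∃ f : Fin L.length → Fin L.length,
        (∀ i, f (f i) = i) ∧
        (∀ i, f i ≠ i) ∧
        (∀ i, (L.get (f i)).1 = (L.get i).1) ∧
        (∀ i, (L.get (f i)).2 = -(L.get i).2) ∧
        ¬ ∃ i k j l : Fin L.length, i < k ∧ k < j ∧ j < l ∧ f i = j ∧ f k = l from
    h L.length L le_rfl hsign hone
  intro n
  induction n with
  | zero =>
    intro L hl _ _
    have hL : L = [] := List.length_eq_zero_iff.mp (Nat.le_zero.mp hl)
    subst hL
    exact ⟨id, fun i => i.elim0, fun i => i.elim0, fun i => i.elim0, fun i => i.elim0,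
      fun ⟨i, _⟩ => i.elim0⟩
  | succ n ih =>
    intro L hl hsign hone
    by_cases hne : L = []
    · subst hne
      exact ⟨id, fun i => i.elim0, fun i => i.elim0, fun i => i.elim0, fun i => i.elim0,
        fun ⟨i, _⟩ => i.elim0⟩
    obtain ⟨A, x, ε, B, rfl⟩ := wm_exists_cancel L hsign hone hne
    have hsign' : ∀ p ∈ A ++ B, p.2 = 1 ∨ p.2 = -1 := by
      intro p hp
      rcases List.mem_append.mp hp with h | h
      · exact hsign p (List.mem_append.mpr (Or.inl h))
      · exact hsign p (List.mem_append.mpr (Or.inr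
          (List.mem_cons_of_mem _ (List.mem_cons_of_mem _ h))))
    have hone' : ((A ++ B).map fun p => FreeGroup.of p.1 ^ p.2).prod = 1 := by
      simp only [List.map_append, List.prod_append, List.map_cons, List.prod_cons] at hone ⊢
      calc ((A.map fun p => FreeGroup.of p.1 ^ p.2).prod
              * (B.map fun p => FreeGroup.of p.1 ^ p.2).prod)
          = (A.map fun p => FreeGroup.of p.1 ^ p.2).prod
              * (FreeGroup.of x ^ ε * (FreeGroup.of x ^ (-ε)
                * (B.map fun p => FreeGroup.of p.1 ^ p.2).prod)) := by
            rw [zpow_neg, ← mul_assoc (FreeGroup.of x ^ ε), mul_inv_cancel, one_mul]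
        _ = 1 := hone
    have hl' : (A ++ B).length ≤ n := by
      simp only [List.length_append, List.length_cons] at hl ⊢
      omega
    obtain ⟨f', p1, p2, p3, p4, p5⟩ := ih (A ++ B) hl' hsign' hone'
    exact wm_glue A B x ε f' p1 p2 p3 p4 p5
end
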